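/- arXiv:1811.02485 — 5 statements merged into one kernel-verified Lean document; each statement's English description precedes it below -/
import Mathlib

section
/- Let γ̄ > 0 and define the lower bound γ_ = √(γ̄ + 1) − 1. If D, I, Y > 0 with Y = D + I, γ̄ = D/I, and the quantization noise q satisfies 0 ≤ q ≤ √(Y·I), then the quantized SINR D/(I + q) is at least γ_ = √(γ̄ + 1) − 1. -/
/-- Quantized SINR lower bound: if `Y = D + I`, `γ̄ = D/I` and the quantization noise
satisfies `0 ≤ q ≤ √(Y·I)`, then `D/(I+q) ≥ √(γ̄+1) − 1`. -/
theorem quantized_sinr_lower_bound (D I Y q γbar : ℝ)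
    (hD : 0 < D) (hI : 0 < I) (hY : 0 < Y) (hYeq : Y = D + I)
    (hγ : γbar = D / I) (hq0 : 0 ≤ q) (hq : q ≤ Real.sqrt (Y * I)) :
    Real.sqrt (γbar + 1) - 1 ≤ D / (I + q) := by
  set s := Real.sqrt (Y * I) with hs
  have hs0 : 0 ≤ s := Real.sqrt_nonneg _
  have hs2 : s ^ 2 = Y * I := Real.sq_sqrt (by positivity)
  have hrw : γbar + 1 = (s / I) ^ 2 := by
    field_simp [hγ]
    nlinarith [hs2, show γbar * I ^ 2 = D * I by rw [hγ, pow_two, ← mul_assoc, div_mul_cancel₀ D hI.ne'], show Y * I = (D + I) * I by rw [hYeq]]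
  rw [hrw, Real.sqrt_sq (by positivity)]
  have h1 : D / (I + s) ≤ D / (I + q) := by
    apply div_le_div_of_nonneg_left hD.le (by linarith) (by linarith)
  have key : s / I - 1 ≤ D / (I + s) := by
    rw [div_sub_one hI.ne', div_le_div_iff₀ hI (by positivity)]
    nlinarith [hs2]
  linarith
end

section
/- If J : ℝ₊ᴹ → ℝ₊ᴹ is two-sided scalable and each component Jᵢ satisfies 0 ≤ Jᵢ(p) ≤ p̄ᵢ for all p, then J has at most one fixed point; equivalently, if p* and p** are both fixed points of J, then p* = p**. -/
/-- Uniqueness of fixed points of a bounded two-sided scalable power update function: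
if `J` is two-sided scalable and `0 ≤ Jᵢ(p) ≤ p̄ᵢ` for all `p`, then any two
(nonnegative) fixed points of `J` coincide. -/
theorem two_sided_scalable_fixed_point_unique (M : ℕ)
    (J : (Fin M → ℝ) → Fin M → ℝ) (pbar : Fin M → ℝ) (hpbar : ∀ i, 0 < pbar i)
    (h2ss : ∀ a : ℝ, 1 < a → ∀ p p' : Fin M → ℝ, (∀ i, 0 ≤ p i) → (∀ i, 0 ≤ p' i) →
      (∀ i, (1 / a) * p i ≤ p' i ∧ p' i ≤ a * p i) →
      ∀ i, (1 / a) * J p i < J p' i ∧ J p' i < a * J p i)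
    (hbd : ∀ p : Fin M → ℝ, ∀ i, 0 ≤ J p i ∧ J p i ≤ pbar i)
    (p₁ p₂ : Fin M → ℝ) (hp₁ : ∀ i, 0 ≤ p₁ i) (hp₂ : ∀ i, 0 ≤ p₂ i)
    (hfix₁ : J p₁ = p₁) (hfix₂ : J p₂ = p₂) :
    p₁ = p₂ := by
  -- J is strictly positive on nonnegative vectors
  have pos : ∀ p : Fin M → ℝ, (∀ i, 0 ≤ p i) → ∀ i, 0 < J p i := by
    intro p hp i
    have h := (h2ss 2 (by norm_num) p p hp hp
      (fun i => ⟨by linarith [hp i], by linarith [hp i]⟩) i).1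
    linarith
  have hp₁pos : ∀ i, 0 < p₁ i := fun i => hfix₁ ▸ pos p₁ hp₁ i
  have hp₂pos : ∀ i, 0 < p₂ i := fun i => hfix₂ ▸ pos p₂ hp₂ i
  by_contra hne
  have hex : ∃ i, p₁ i ≠ p₂ i := by
    by_contra h
    push_neg at h
    exact hne (funext h)
  obtain ⟨i₀, hi₀⟩ := hex
  have hNE : (Finset.univ : Finset (Fin M)).Nonempty := ⟨i₀, Finset.mem_univ i₀⟩
  set f : Fin M → ℝ := fun i => max (p₂ i / p₁ i) (p₁ i / p₂ i) with hf
  set a : ℝ := Finset.univ.sup' hNE f with ha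
  have hfi : ∀ i, f i ≤ a := fun i => Finset.le_sup' f (Finset.mem_univ i)
  have ha1 : 1 < a := by
    have h1 : f i₀ ≤ a := hfi i₀
    rcases lt_or_gt_of_ne hi₀ with h | h
    · have : 1 < p₂ i₀ / p₁ i₀ := (one_lt_div (hp₁pos i₀)).mpr h
      calc (1:ℝ) < p₂ i₀ / p₁ i₀ := this
        _ ≤ f i₀ := le_max_left _ _
        _ ≤ a := h1
    · have : 1 < p₁ i₀ / p₂ i₀ := (one_lt_div (hp₂pos i₀)).mpr h
      calc (1:ℝ) < p₁ i₀ / p₂ i₀ := this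
        _ ≤ f i₀ := le_max_right _ _
        _ ≤ a := h1
  have hapos : 0 < a := by linarith
  have hbounds : ∀ i, (1 / a) * p₁ i ≤ p₂ i ∧ p₂ i ≤ a * p₁ i := by
    intro i
    have h1 : p₂ i / p₁ i ≤ a := le_trans (le_max_left _ _) (hfi i)
    have h2 : p₁ i / p₂ i ≤ a := le_trans (le_max_right _ _) (hfi i)
    constructor
    · have : p₁ i ≤ a * p₂ i := (div_le_iff₀ (hp₂pos i)).mp h2
      rw [one_div]
      rw [inv_mul_le_iff₀ hapos] at *
      linarith
    · exact (div_le_iff₀ (hp₁pos i)).mp h1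
  have hstrict := h2ss a ha1 p₁ p₂ hp₁ hp₂ hbounds
  rw [hfix₁, hfix₂] at hstrict
  -- sup' attained
  obtain ⟨j, _, hj⟩ := Finset.exists_mem_eq_sup' hNE f
  have hj' : f j = a := hj.symm
  have h0 : max (p₂ j / p₁ j) (p₁ j / p₂ j) = a := hj'
  rcases max_cases (p₂ j / p₁ j) (p₁ j / p₂ j) with ⟨heq, _⟩ | ⟨heq, _⟩
  · rw [heq] at h0
    rw [div_eq_iff (ne_of_gt (hp₁pos j))] at h0
    have := (hstrict j).2
    nlinarith
  · rw [heq] at h0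
    rw [div_eq_iff (ne_of_gt (hp₂pos j))] at h0
    have h2 := (hstrict j).1
    rw [one_div, inv_mul_lt_iff₀ hapos] at h2
    nlinarith
end

section
/- For 0 < x < 1 and fixed R > 0, ξ > 0, the two payoff functions U₁(p) = (p/R)ˣ − λ·p and U₂(p) = −(p − ξ·R^{x/(x−1)})² have the same unique maximizer over p > 0 when ξ = (λ/x)^{1/(x−1)}. -/
/-- Tangent line inequality for `t ↦ t^x`, `0 < x < 1`: strict concavity. -/
lemma rpow_tangent_lt {a b x : ℝ} (ha : 0 < a) (hb : 0 < b) (hab : a ≠ b)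
    (hx0 : 0 < x) (hx1 : x < 1) :
    a ^ x < b ^ x + x * b ^ (x - 1) * (a - b) := by
  have hs : a = b * (1 + (a / b - 1)) := by field_simp; ring
  have hs1 : (-1 : ℝ) ≤ a / b - 1 := by
    have : 0 < a / b := div_pos ha hb
    linarith
  have hs2 : a / b - 1 ≠ 0 := by
    intro h
    apply hab
    field_simp at h
    linarith
  have key := rpow_one_add_lt_one_add_mul_self hs1 hs2 hx0 hx1
  have hbx : (0 : ℝ) < b ^ x := Real.rpow_pos_of_pos hb x
  have h1 : a ^ x = b ^ x * (1 + (a / b - 1)) ^ x := by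
    rw [← Real.mul_rpow hb.le (by linarith)]
    rw [← hs]
  have h2 : b ^ x * (1 + x * (a / b - 1)) = b ^ x + x * b ^ (x - 1) * (a - b) := by
    have hbx1 : b ^ (x - 1) = b ^ x / b := by
      rw [Real.rpow_sub hb, Real.rpow_one]
    rw [hbx1]
    field_simp
  calc a ^ x = b ^ x * (1 + (a / b - 1)) ^ x := h1
    _ < b ^ x * (1 + x * (a / b - 1)) := by
        exact (mul_lt_mul_iff_right₀ hbx).mpr key
    _ = b ^ x + x * b ^ (x - 1) * (a - b) := h2

/-- Best-response equivalence: for `0 < x < 1`, `R > 0`, `λ > 0` and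
`ξ = (λ/x)^{1/(x−1)}`, the payoffs `U₁(p) = (p/R)^x − λ·p` and
`U₂(p) = −(p − ξ·R^{x/(x−1)})²` have the same unique maximizer
`p* = ξ·R^{x/(x−1)}` over `p > 0`. -/
theorem payoff_best_response_equivalence (x R lam ξ : ℝ)
    (hx0 : 0 < x) (hx1 : x < 1) (hR : 0 < R) (hlam : 0 < lam) (hξ : 0 < ξ)
    (hξeq : ξ = (lam / x) ^ (1 / (x - 1))) :
    ξ * R ^ (x / (x - 1)) ∈ Set.Ioi (0 : ℝ) ∧
      (∀ p ∈ Set.Ioi (0 : ℝ), p ≠ ξ * R ^ (x / (x - 1)) →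
        (p / R) ^ x - lam * p <
          (ξ * R ^ (x / (x - 1)) / R) ^ x - lam * (ξ * R ^ (x / (x - 1)))) ∧
      (∀ p ∈ Set.Ioi (0 : ℝ), p ≠ ξ * R ^ (x / (x - 1)) →
        -(p - ξ * R ^ (x / (x - 1))) ^ 2 <
          -(ξ * R ^ (x / (x - 1)) - ξ * R ^ (x / (x - 1))) ^ 2) := by
  set q := ξ * R ^ (x / (x - 1)) with hq
  have hx1' : x - 1 ≠ 0 := by linarith
  have hqpos : 0 < q := mul_pos hξ (Real.rpow_pos_of_pos hR _)
  have hqR : q / R = ξ * R ^ (1 / (x - 1)) := by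
    rw [hq, mul_div_assoc, ← Real.rpow_sub_one hR.ne']
    congr 1
    field_simp
    ring_nf
  -- key derivative condition: (q/R)^(x-1) = lam * R / x
  have hderiv : (q / R) ^ (x - 1) = lam * R / x := by
    rw [hqR, Real.mul_rpow hξ.le (Real.rpow_pos_of_pos hR _).le, hξeq,
      ← Real.rpow_mul (by positivity), ← Real.rpow_mul hR.le]
    simp only [one_div, inv_mul_cancel₀ hx1']
    rw [Real.rpow_one, Real.rpow_one]
    field_simp
  refine ⟨hqpos, ?_, ?_⟩
  · intro p hp hpne
    have hp0 : 0 < p := hp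
    have key := rpow_tangent_lt (a := p / R) (b := q / R)
      (div_pos hp0 hR) (div_pos hqpos hR)
      (fun h => hpne (by field_simp at h; linarith)) hx0 hx1
    rw [hderiv] at key
    have : x * (lam * R / x) * (p / R - q / R) = lam * (p - q) := by
      field_simp
    rw [this] at key
    linarith
  · intro p hp hpne
    have : (0:ℝ) < (p - q) ^ 2 := sq_pos_of_ne_zero (sub_ne_zero.mpr hpne)
    simp only [sub_self]
    norm_num
    linarith
end

section
/- If I : ℝ₊ → ℝ₊ satisfies the strict two-sided scaling property ((1/a)·I(R) < I(R′) < a·I(R) whenever a > 1 and (1/a)·R ≤ R′ ≤ a·R), then for any constant p̄ > 0, the clipped function I^H(R) = min(p̄, I(R)) also satisfies the same strict two-sided scaling property. -/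
/-- Clipping by a positive maximum power preserves the strict two-sided scaling
property: if `I` is strictly two-sided scalable, so is `I^H(R) = min(p̄, I(R))`. -/
theorem clipped_power_update_two_sided_scalable (I : ℝ → ℝ)
    (hInonneg : ∀ R : ℝ, 0 < R → 0 ≤ I R)
    (hI : ∀ a R R' : ℝ, 1 < a → 0 < R → 0 < R' → (1 / a) * R ≤ R' → R' ≤ a * R →
      (1 / a) * I R < I R' ∧ I R' < a * I R)
    (pbar : ℝ) (hpbar : 0 < pbar) :
    ∀ a R R' : ℝ, 1 < a → 0 < R → 0 < R' → (1 / a) * R ≤ R' → R' ≤ a * R →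
      (1 / a) * min pbar (I R) < min pbar (I R') ∧
        min pbar (I R') < a * min pbar (I R) := by
  intro a R R' ha hR hR' h1 h2
  obtain ⟨hlo, hhi⟩ := hI a R R' ha hR hR' h1 h2
  have ha0 : (0:ℝ) < a := lt_trans one_pos ha
  have hinv : (0:ℝ) < 1 / a := by positivity
  constructor
  · apply lt_min
    · calc (1 / a) * min pbar (I R) ≤ (1 / a) * pbar := by
            apply mul_le_mul_of_nonneg_left (min_le_left _ _) hinv.le
        _ < 1 * pbar := by
            apply mul_lt_mul_of_pos_right _ hpbar
            rw [div_lt_one ha0]; exact ha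
        _ = pbar := one_mul _
    · calc (1 / a) * min pbar (I R) ≤ (1 / a) * I R := by
            apply mul_le_mul_of_nonneg_left (min_le_right _ _) hinv.le
        _ < I R' := hlo
  · rw [mul_min_of_nonneg _ _ ha0.le]
    apply lt_min
    · calc min pbar (I R') ≤ pbar := min_le_left _ _
        _ < a * pbar := by nlinarith
    · exact lt_of_le_of_lt (min_le_right _ _) hhi
end

section
/- Let G = diag(γ₁, …, γₙ) with γᵢ > 0, H an n×n entrywise-nonnegative matrix with zero diagonal, and g ∈ ℝⁿ with gᵢ > 0. If the spectral radius ρ(GH) < 1, then (I − GH)⁻¹ = Σ_{k=0}^∞ (GH)ᵏ exists and is entrywise nonnegative, and p* = (I − GH)⁻¹ g is a nonnegative solution of (I − GH)p = g; moreover p* is Pareto-minimal among all p ≥ 0 with (I − GH)p ≥ g, i.e., every such p satisfies p ≥ p* componentwise. -/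
open Matrix Filter

section Aux

attribute [local instance] Matrix.linftyOpNormedRing Matrix.linftyOpNormedAlgebra

lemma matrix_pow_entry_bound {n : ℕ} (B : Matrix (Fin n) (Fin n) ℂ)
    (hρ : ∀ μ ∈ spectrum ℂ B, ‖μ‖ < 1) :
    ∃ r : NNReal, r < 1 ∧ ∀ᶠ k : ℕ in atTop, ∀ i j, ‖(B ^ k) i j‖₊ ≤ r ^ k := by
  have hrad : spectralRadius ℂ B < 1 := by
    rcases Set.eq_empty_or_nonempty (spectrum ℂ B) with h | h
    · simp [spectralRadius, h]
    · have := spectrum.spectralRadius_lt_of_forall_lt_of_nonempty h (r := 1)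
        (fun k hk => by
          have := hρ k hk
          rw [← NNReal.coe_lt_coe]
          simpa using this)
      simpa using this
  obtain ⟨r, hr1, hr2⟩ := ENNReal.lt_iff_exists_nnreal_btwn.mp hrad
  refine ⟨r, by exact_mod_cast hr2, ?_⟩
  have hg := spectrum.pow_nnnorm_pow_one_div_tendsto_nhds_spectralRadius B
  have hev : ∀ᶠ k : ℕ in atTop, (‖B ^ k‖₊ : ENNReal) ^ (1 / (k : ℝ)) < r :=
    hg.eventually_lt_const hr1
  filter_upwards [hev, eventually_ge_atTop 1] with k hk hk1 i j
  have hk0 : (k : ℝ) ≠ 0 := by positivity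
  have hle : (‖B ^ k‖₊ : ENNReal) ≤ (r : ENNReal) ^ k := by
    have := ENNReal.rpow_le_rpow hk.le (by positivity : (0:ℝ) ≤ (k:ℝ))
    rwa [← ENNReal.rpow_mul, one_div, inv_mul_cancel₀ hk0, ENNReal.rpow_one,
      ENNReal.rpow_natCast] at this
  have h2 : ‖B ^ k‖₊ ≤ r ^ k := by exact_mod_cast hle
  refine le_trans ?_ h2
  calc ‖(B ^ k) i j‖₊ ≤ ∑ j', ‖(B ^ k) i j'‖₊ :=
        Finset.single_le_sum (f := fun j' => ‖(B ^ k) i j'‖₊)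
          (fun _ _ => zero_le') (Finset.mem_univ j)
    _ ≤ ‖B ^ k‖₊ := by
        rw [Matrix.linfty_opNNNorm_def]
        exact Finset.le_sup (f := fun i => ∑ j', ‖(B ^ k) i j'‖₊) (Finset.mem_univ i)

end Aux

/-- Perron–Frobenius feasibility and Pareto-optimality for power control:
with `G = diag(γ)` (targets `γᵢ > 0`), `H` entrywise nonnegative with zero
diagonal, `g > 0`, and spectral radius of `GH` (all complex eigenvalues) `< 1`,
the matrix `I − GH` is invertible with
`(I − GH)⁻¹ = Σ_{k=0}^∞ (GH)ᵏ` entrywise nonnegative, and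
`p* = (I − GH)⁻¹ g` is a nonnegative solution of `(I − GH)p = g` which is
Pareto-minimal among all `p ≥ 0` with `(I − GH)p ≥ g`. -/
theorem power_control_perron_frobenius (n : ℕ) (γ : Fin n → ℝ)
    (H : Matrix (Fin n) (Fin n) ℝ) (g : Fin n → ℝ)
    (hγ : ∀ i, 0 < γ i) (hH : ∀ i j, 0 ≤ H i j) (hHdiag : ∀ i, H i i = 0)
    (hg : ∀ i, 0 < g i)
    (hρ : ∀ μ ∈ spectrum ℂ
      (((Matrix.diagonal γ * H).map (Complex.ofReal : ℝ → ℂ))),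
      ‖μ‖ < 1) :
    IsUnit (1 - Matrix.diagonal γ * H) ∧
      Summable (fun k : ℕ => (Matrix.diagonal γ * H) ^ k) ∧
      (1 - Matrix.diagonal γ * H)⁻¹ = (∑' k : ℕ, (Matrix.diagonal γ * H) ^ k) ∧
      (∀ i j, 0 ≤ ((1 - Matrix.diagonal γ * H)⁻¹) i j) ∧
      (∀ i, 0 ≤ ((1 - Matrix.diagonal γ * H)⁻¹ *ᵥ g) i) ∧
      (1 - Matrix.diagonal γ * H) *ᵥ ((1 - Matrix.diagonal γ * H)⁻¹ *ᵥ g) = g ∧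
      (∀ p : Fin n → ℝ, (∀ i, 0 ≤ p i) →
        (∀ i, g i ≤ ((1 - Matrix.diagonal γ * H) *ᵥ p) i) →
        ∀ i, ((1 - Matrix.diagonal γ * H)⁻¹ *ᵥ g) i ≤ p i) := by
  set A : Matrix (Fin n) (Fin n) ℝ := Matrix.diagonal γ * H with hA
  -- entrywise bound from the complex spectral radius
  obtain ⟨r, hr, hev⟩ := matrix_pow_entry_bound (A.map (Complex.ofReal : ℝ → ℂ)) hρ
  have hmap : ∀ k : ℕ, (A.map (Complex.ofReal : ℝ → ℂ)) ^ k = (A ^ k).map Complex.ofReal := by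
    intro k
    have := map_pow (Complex.ofRealHom.mapMatrix :
      Matrix (Fin n) (Fin n) ℝ →+* Matrix (Fin n) (Fin n) ℂ) A k
    have h := this.symm; simp only [RingHom.mapMatrix_apply] at h; exact h
  -- entrywise summability
  have hesum : ∀ i j, Summable fun k : ℕ => (A ^ k) i j := by
    intro i j
    apply Summable.of_norm_bounded_eventually_nat
      (summable_geometric_of_lt_one r.coe_nonneg (by exact_mod_cast hr))
    filter_upwards [hev] with k hk
    have := hk i j
    rw [hmap k] at this
    have h2 : ‖(A ^ k) i j‖₊ ≤ r ^ k := by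
      simpa [Matrix.map_apply] using this
    exact_mod_cast h2
  -- nonnegativity of entries of powers
  have hAnn : ∀ i j, 0 ≤ A i j := by
    intro i j
    rw [hA, Matrix.diagonal_mul]
    exact mul_nonneg (hγ i).le (hH i j)
  have hpow : ∀ (k : ℕ) (i j : Fin n), 0 ≤ (A ^ k) i j := by
    intro k
    induction k with
    | zero => intro i j; rw [pow_zero, Matrix.one_apply]; split <;> norm_num
    | succ m ih =>
      intro i j
      rw [pow_succ, Matrix.mul_apply]
      exact Finset.sum_nonneg fun l _ => mul_nonneg (ih i l) (hAnn l j)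
  -- summability of the matrix series
  have hSum : Summable fun k : ℕ => A ^ k :=
    Pi.summable.mpr fun i => Pi.summable.mpr fun j => hesum i j
  set S : Matrix (Fin n) (Fin n) ℝ := ∑' k : ℕ, A ^ k with hSdef
  have hS : HasSum (fun k : ℕ => A ^ k) S := hSum.hasSum
  have hStsum : ∀ i j, S i j = ∑' k : ℕ, (A ^ k) i j := by
    intro i j
    exact ((Pi.hasSum.mp ((Pi.hasSum.mp hS) i)) j).tsum_eq.symm
  have hSnn : ∀ i j, 0 ≤ S i j := fun i j => by
    rw [hStsum i j]; exact tsum_nonneg fun k => hpow k i j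
  -- powers tend to zero
  have htend : Tendsto (fun k : ℕ => A ^ k) atTop (nhds 0) := hSum.tendsto_atTop_zero
  -- left and right inverse identities
  have hleft : (1 - A) * S = 1 := by
    have h2 : HasSum (fun k : ℕ => (1 - A) * A ^ k) ((1 - A) * S) := hS.mul_left _
    have h3 := h2.tendsto_sum_nat
    have h4 : Tendsto (fun m : ℕ => ∑ k ∈ Finset.range m, (1 - A) * A ^ k) atTop
        (nhds (1 - 0)) := by
      have : ∀ m : ℕ, ∑ k ∈ Finset.range m, (1 - A) * A ^ k = 1 - A ^ m := by
        intro m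
        rw [← Finset.mul_sum, mul_neg_geom_sum]
      simp only [this]
      exact tendsto_const_nhds.sub htend
    have := tendsto_nhds_unique h3 h4
    simpa using this
  have hright : S * (1 - A) = 1 := by
    have h2 : HasSum (fun k : ℕ => A ^ k * (1 - A)) (S * (1 - A)) := hS.mul_right _
    have h3 := h2.tendsto_sum_nat
    have h4 : Tendsto (fun m : ℕ => ∑ k ∈ Finset.range m, A ^ k * (1 - A)) atTop
        (nhds (1 - 0)) := by
      have : ∀ m : ℕ, ∑ k ∈ Finset.range m, A ^ k * (1 - A) = 1 - A ^ m := by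
        intro m
        rw [← Finset.sum_mul, geom_sum_mul_neg]
      simp only [this]
      exact tendsto_const_nhds.sub htend
    have := tendsto_nhds_unique h3 h4
    simpa using this
  have hUnit : IsUnit (1 - A) :=
    (Matrix.isUnit_iff_isUnit_det _).mpr (Matrix.isUnit_det_of_right_inverse hleft)
  have hinv : (1 - A)⁻¹ = S := Matrix.inv_eq_right_inv hleft
  have hinvnn : ∀ i j, 0 ≤ ((1 - A)⁻¹) i j := by rw [hinv]; exact hSnn
  have hmulnn : ∀ (v : Fin n → ℝ), (∀ i, 0 ≤ v i) → ∀ i, 0 ≤ ((1 - A)⁻¹ *ᵥ v) i := by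
    intro v hv i
    rw [Matrix.mulVec, dotProduct]
    exact Finset.sum_nonneg fun j _ => mul_nonneg (hinvnn i j) (hv j)
  have hsolve : (1 - A) *ᵥ ((1 - A)⁻¹ *ᵥ g) = g := by
    rw [Matrix.mulVec_mulVec, hinv, hleft, Matrix.one_mulVec]
  refine ⟨hUnit, hSum, hinv, hinvnn, hmulnn g fun i => (hg i).le, hsolve, ?_⟩
  intro p hp0 hpg i
  have hpeq : (1 - A)⁻¹ *ᵥ ((1 - A) *ᵥ p) = p := by
    rw [Matrix.mulVec_mulVec, hinv, hright, Matrix.one_mulVec]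
  have hkey : 0 ≤ ((1 - A)⁻¹ *ᵥ ((1 - A) *ᵥ p - g)) i :=
    hmulnn _ (fun j => sub_nonneg.mpr (hpg j)) i
  rw [Matrix.mulVec_sub] at hkey
  have : ((1 - A)⁻¹ *ᵥ g) i ≤ ((1 - A)⁻¹ *ᵥ ((1 - A) *ᵥ p)) i := by
    have := hkey
    simp only [Pi.sub_apply] at this
    linarith
  rwa [hpeq] at this
end
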